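/- arXiv:1105.3712 — 2 statements merged into one kernel-verified Lean document; each statement's English description precedes it below -/
import Mathlib

section
/- Let H be a finite simple graph on n vertices with chromatic number χ. Then ρ(H) ≥ (n/2)·(n/χ + 1), i.e., 2·χ·ρ(H) ≥ n·(n + χ). -/
-- arithmetic identity: 2χ * ∑_{j<n} (j/χ + 1) = n(n+χ) + (n%χ)(χ - n%χ)
lemma arith_id (χ : ℕ) (hχ : 0 < χ) (n : ℕ) :
    2 * χ * (∑ j ∈ Finset.range n, (j / χ + 1)) = n * (n + χ) + (n % χ) * (χ - n % χ) := by
  induction n with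
  | zero => simp
  | succ n ih =>
    rw [Finset.sum_range_succ, Nat.mul_add, ih]
    have hqr : χ * (n / χ) + n % χ = n := Nat.div_add_mod n χ
    have hr : n % χ < χ := Nat.mod_lt n hχ
    set q := n / χ with hq
    set r := n % χ with hrdef
    rcases lt_or_eq_of_le (Nat.succ_le_of_lt hr) with h | h
    · -- r + 1 < χ
      have hr' : (n + 1) % χ = r + 1 := by
        rw [← hqr]
        rw [add_assoc, Nat.mul_add_mod]
        exact Nat.mod_eq_of_lt h
      rw [hr']
      zify [le_of_lt hr, le_of_lt h]
      have hqr' : (χ : ℤ) * q + r = n := by exact_mod_cast hqr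
      linear_combination 2 * hqr'
    · -- r + 1 = χ
      have hr' : (n + 1) % χ = 0 := by
        have h2 : r + 1 = χ := h
        rw [← hqr, add_assoc, Nat.mul_add_mod, h2, Nat.mod_self]
      rw [hr']
      zify [le_of_lt hr]
      have hqr' : (χ : ℤ) * q + r = n := by exact_mod_cast hqr
      have h' : (r : ℤ) + 1 = χ := by exact_mod_cast h
      linear_combination 2 * hqr' - (r + 1) * h'

/-- `ArrowsR G H` (written `G →r H`) means: every proper vertex coloring of `G`
contains a rainbow induced subgraph isomorphic to `H`, i.e. an induced copy of `H`
(a graph embedding) whose vertices receive pairwise distinct colors. -/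
def ArrowsR {α β : Type} (G : SimpleGraph α) (H : SimpleGraph β) : Prop :=
  ∀ c : α → ℕ, (∀ u v : α, G.Adj u v → c u ≠ c v) →
    ∃ f : H ↪g G, Function.Injective fun h => c (f h)

/-- blow-up of `H` by cliques of size `n` -/
def blowup {V : Type} (H : SimpleGraph V) (n : ℕ) : SimpleGraph (V × Fin n) where
  Adj a b := (a.1 = b.1 ∧ a.2 ≠ b.2) ∨ H.Adj a.1 b.1
  symm := by
    constructor
    rintro a b (⟨h1, h2⟩ | h)
    · exact Or.inl ⟨h1.symm, h2.symm⟩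
    · exact Or.inr h.symm
  loopless := by constructor; rintro a (⟨_, h⟩ | h) <;> simp_all

lemma greedy {V : Type} [Fintype V] [DecidableEq V] {n : ℕ} (hn : 0 < n)
    (hcard : Fintype.card V = n) (c : V × Fin n → ℕ)
    (hc : ∀ v : V, ∀ i j : Fin n, i ≠ j → c (v, i) ≠ c (v, j)) (s : Finset V) :
    ∃ φ : V → Fin n, Set.InjOn (fun v => c (v, φ v)) s := by
  classical
  induction s using Finset.induction with
  | empty => exact ⟨fun _ => ⟨0, hn⟩, by simp⟩
  | @insert a s ha ih =>
    obtain ⟨φ, hφ⟩ := ih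
    have hscard : s.card < n := by
      rw [← hcard]
      exact Finset.card_lt_card ⟨Finset.subset_univ s, fun h => ha (h (Finset.mem_univ a))⟩
    set F : Finset ℕ := s.image (fun v => c (v, φ v)) with hF
    have hFcard : F.card < n := lt_of_le_of_lt (Finset.card_image_le) hscard
    have hA : ((Finset.univ : Finset (Fin n)).image (fun i => c (a, i))).card = n := by
      rw [Finset.card_image_of_injective _ (fun i j hij => by
        by_contra hne; exact hc a i j hne hij)]
      simp
    have : ¬ ((Finset.univ : Finset (Fin n)).image (fun i => c (a, i))) ⊆ F := by
      intro hsub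
      have := Finset.card_le_card hsub
      omega
    obtain ⟨x, hxA, hxF⟩ := Finset.not_subset.mp this
    obtain ⟨i, _, hi⟩ := Finset.mem_image.mp hxA
    refine ⟨Function.update φ a i, ?_⟩
    intro u hu v hv huv
    dsimp only at huv
    simp only [Finset.coe_insert, Set.mem_insert_iff, Finset.mem_coe] at hu hv
    have keyu : ∀ w, w ∈ s → c (w, Function.update φ a i w) = c (w, φ w) := by
      intro w hw
      rw [Function.update_of_ne (by rintro rfl; exact ha hw)]
    rcases hu with rfl | hu <;> rcases hv with rfl | hv
    · rfl
    · exfalso; apply hxF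
      simp only [Function.update_self, hi] at huv
      rw [keyu v hv] at huv
      exact hF ▸ Finset.mem_image.mpr ⟨v, hv, (huv ▸ rfl)⟩
    · exfalso; apply hxF
      simp only [Function.update_self, hi] at huv
      rw [keyu u hu] at huv
      exact hF ▸ Finset.mem_image.mpr ⟨u, hu, (huv ▸ rfl)⟩
    · rw [keyu u hu, keyu v hv] at huv
      exact hφ hu hv huv

lemma arrows_blowup {V : Type} [Fintype V] (H : SimpleGraph V) {n : ℕ} (hn : 0 < n)
    (hcard : Fintype.card V = n) : ArrowsR (blowup H n) H := by
  classical
  intro c hc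
  have hc' : ∀ v : V, ∀ i j : Fin n, i ≠ j → c (v, i) ≠ c (v, j) := by
    intro v i j hij
    exact hc _ _ (Or.inl ⟨rfl, hij⟩)
  obtain ⟨φ, hφ⟩ := greedy hn hcard c hc' Finset.univ
  have hinj : Function.Injective fun v => c (v, φ v) :=
    Set.injOn_univ.mp (by simpa using hφ)
  refine ⟨⟨⟨fun v => (v, φ v), fun v w h => congrArg Prod.fst h⟩, ?_⟩, ?_⟩
  · intro u v
    constructor
    · rintro (⟨h1, h2⟩ | h)
      · exact absurd (congrArg φ h1) h2
      · exact h
    · intro h; exact Or.inr h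
  · exact hinj

lemma ArrowsR.of_iso {α β γ : Type} {G : SimpleGraph α} {G' : SimpleGraph β}
    {H : SimpleGraph γ} (e : G ≃g G') (h : ArrowsR G H) : ArrowsR G' H := by
  intro c hc
  obtain ⟨f, hf⟩ := h (fun v => c (e v)) (fun u v huv => hc _ _ (e.map_adj_iff.mpr huv))
  exact ⟨e.toEmbedding.comp f, hf⟩

lemma exists_arrows {V : Type} [Fintype V] (H : SimpleGraph V) :
    ∃ m : ℕ, ∃ G : SimpleGraph (Fin m), ArrowsR G H := by
  classical
  rcases Nat.eq_zero_or_pos (Fintype.card V) with h0 | hpos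
  · have : IsEmpty V := Fintype.card_eq_zero_iff.mp h0
    refine ⟨0, ⊥, fun c hc => ⟨⟨⟨fun v => isEmptyElim v, fun v => isEmptyElim v⟩,
      fun {a} => isEmptyElim a⟩, fun a => isEmptyElim a⟩⟩
  · set n := Fintype.card V with hn
    have hcard : Fintype.card (V × Fin n) = n * n := by simp [hn]
    let e : (V × Fin n) ≃ Fin (n * n) := Fintype.equivFinOfCardEq hcard
    refine ⟨n * n, (blowup H n).comap e.symm, ?_⟩
    have iso : blowup H n ≃g (blowup H n).comap ⇑e.symm :=
      ⟨e, by intro a b; simp [SimpleGraph.comap]⟩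
    exact (arrows_blowup H hpos rfl).of_iso iso


lemma key {V : Type} [Fintype V] {H : SimpleGraph V} {n χ m : ℕ}
    (hn : n = Fintype.card V) (hχpos : 0 < χ) (CH : H.Coloring (Fin χ))
    (G : SimpleGraph (Fin m)) (hG : ArrowsR G H) :
    ∃ C : ℕ → Finset (Fin m),
      (∀ j < n, ∀ k < n, j ≠ k → Disjoint (C j) (C k)) ∧
      (∀ j < n, n - j ≤ χ * (C j).card) := by
  classical
  suffices main : ∀ i : ℕ, i ≤ n → ∃ C : ℕ → Finset (Fin m),
      (∀ j < i, ∀ v ∈ C j, ∀ w ∈ C j, ¬ G.Adj v w) ∧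
      (∀ j < i, ∀ k < i, j ≠ k → Disjoint (C j) (C k)) ∧
      (∀ j < i, n - j ≤ χ * (C j).card) by
    obtain ⟨C, _, h2, h3⟩ := main n le_rfl
    exact ⟨C, h2, h3⟩
  intro i
  induction i with
  | zero => exact fun _ => ⟨fun _ => ∅, by simp, by simp, by simp⟩
  | succ i ih =>
    intro hi
    obtain ⟨C, h1, h2, h3⟩ := ih (Nat.le_of_succ_le hi)
    set c : Fin m → ℕ :=
      fun v => if h : ∃ j, j < i ∧ v ∈ C j then Nat.find h else n + v.val with hcdef
    have hfindeq : ∀ v (h : ∃ j, j < i ∧ v ∈ C j), c v = Nat.find h := by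
      intro v h; simp only [hcdef, dif_pos h]
    have hnone : ∀ v, (¬ ∃ j, j < i ∧ v ∈ C j) → c v = n + v.val := by
      intro v h; simp only [hcdef, dif_neg h]
    have hc : ∀ u v, G.Adj u v → c u ≠ c v := by
      intro u v huv hcc
      by_cases hu : ∃ j, j < i ∧ u ∈ C j <;> by_cases hv : ∃ j, j < i ∧ v ∈ C j
      · obtain ⟨hju, hmu⟩ := Nat.find_spec hu
        obtain ⟨hjv, hmv⟩ := Nat.find_spec hv
        rw [hfindeq u hu, hfindeq v hv] at hcc
        rw [hcc] at hmu
        exact h1 _ hjv _ hmu _ hmv huv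
      · have h1u := (Nat.find_spec hu).1
        rw [hfindeq u hu, hnone v hv] at hcc
        omega
      · have h1v := (Nat.find_spec hv).1
        rw [hnone u hu, hfindeq v hv] at hcc
        omega
      · rw [hnone u hu, hnone v hv] at hcc
        have : u = v := Fin.val_injective (by omega)
        exact G.loopless.irrefl u (this ▸ huv)
    obtain ⟨f, hf⟩ := hG c hc
    set T : Finset V := Finset.univ.filter (fun h => ¬ ∃ j, j < i ∧ f h ∈ C j) with hTdef
    have hUT : (Finset.univ.filter (fun h => ∃ j, j < i ∧ f h ∈ C j)).card ≤ i := by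
      have hmaps : ∀ h ∈ Finset.univ.filter (fun h => ∃ j, j < i ∧ f h ∈ C j),
          c (f h) ∈ Finset.range i := by
        intro h hh
        obtain ⟨-, hex⟩ := Finset.mem_filter.mp hh
        rw [hfindeq _ hex]
        exact Finset.mem_range.mpr (Nat.find_spec hex).1
      calc (Finset.univ.filter (fun h => ∃ j, j < i ∧ f h ∈ C j)).card
          ≤ (Finset.range i).card :=
            Finset.card_le_card_of_injOn (fun h => c (f h)) hmaps
              (fun x _ y _ hxy => hf hxy)
        _ = i := Finset.card_range i
    have hTcard : n - i ≤ T.card := by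
      have hsplit := Finset.card_filter_add_card_filter_not
        (s := (Finset.univ : Finset V)) (p := fun h => ∃ j, j < i ∧ f h ∈ C j)
      have huniv : (Finset.univ : Finset V).card = n := by rw [hn]; simp
      rw [hTdef]
      omega
    have hpig : ∃ a : Fin χ, T.card ≤ χ * (T.filter (fun h => CH h = a)).card := by
      have hsum : ∑ a : Fin χ, (T.filter (fun h => CH h = a)).card = T.card :=
        (Finset.card_eq_sum_card_fiberwise (fun x _ => Finset.mem_univ (CH x))).symm
      have hle : ∑ _a : Fin χ, T.card ≤ ∑ a : Fin χ, χ * (T.filter (fun h => CH h = a)).card := by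
        rw [Finset.sum_const, ← Finset.mul_sum, hsum]
        simp [mul_comm]
      obtain ⟨a, _, ha⟩ := Finset.exists_le_of_sum_le
        (Finset.univ_nonempty_iff.mpr ⟨⟨0, hχpos⟩⟩) hle
      exact ⟨a, ha⟩
    obtain ⟨a, ha⟩ := hpig
    set Ta := T.filter (fun h => CH h = a) with hTa
    set Cn : Finset (Fin m) := Ta.image f with hCndef
    have hCncard : Ta.card = Cn.card :=
      (Finset.card_image_of_injective Ta f.injective).symm
    refine ⟨fun k => if k = i then Cn else C k, ?_, ?_, ?_⟩
    · intro j hj v hvmem w hwmem hadj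
      by_cases hji : j = i
      · subst hji
        simp only [if_pos rfl, hCndef] at hvmem hwmem
        obtain ⟨hv', hvmem', rfl⟩ := Finset.mem_image.mp hvmem
        obtain ⟨hw', hwmem', rfl⟩ := Finset.mem_image.mp hwmem
        have hadj' : H.Adj hv' hw' := f.map_rel_iff.mp hadj
        have hca : CH hv' = a := (Finset.mem_filter.mp hvmem').2
        have hcb : CH hw' = a := (Finset.mem_filter.mp hwmem').2
        exact CH.valid hadj' (hca.trans hcb.symm)
      · simp only [if_neg hji] at hvmem hwmem
        exact h1 j (by omega) _ hvmem _ hwmem hadj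
    · intro j hj k hk hjk
      by_cases hji : j = i <;> by_cases hki : k = i
      · omega
      · subst hji
        simp only [if_pos rfl, if_neg hki]
        rw [Finset.disjoint_left]
        rintro x hx hxk
        rw [hCndef] at hx
        obtain ⟨h', hmem, rfl⟩ := Finset.mem_image.mp hx
        have := (Finset.mem_filter.mp (Finset.mem_filter.mp hmem).1).2
        exact this ⟨k, by omega, hxk⟩
      · subst hki
        simp only [if_pos rfl, if_neg hji]
        rw [Finset.disjoint_right]
        rintro x hx hxk
        rw [hCndef] at hx
        obtain ⟨h', hmem, rfl⟩ := Finset.mem_image.mp hx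
        have := (Finset.mem_filter.mp (Finset.mem_filter.mp hmem).1).2
        exact this ⟨j, by omega, hxk⟩
      · simp only [if_neg hji, if_neg hki]
        exact h2 j (by omega) k (by omega) hjk
    · intro j hj
      by_cases hji : j = i
      · simp only [if_pos hji]
        rw [← hCncard, hji]
        exact le_trans hTcard ha
      · simp only [if_neg hji]
        exact h3 j (by omega)

/-- `rho H` is the minimum number of vertices of a graph `G` with `G →r H`. -/
noncomputable def rho {β : Type} (H : SimpleGraph β) : ℕ :=
  sInf {m : ℕ | ∃ G : SimpleGraph (Fin m), ArrowsR G H}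

/-- `ρ(H) ≥ (n/2)(n/χ + 1)`, stated as `2·χ·ρ(H) ≥ n·(n + χ)`. -/
theorem stmt2 {V : Type} [Fintype V] (H : SimpleGraph V) (n χ : ℕ)
    (hn : n = Fintype.card V) (hχ : H.chromaticNumber = χ) :
    n * (n + χ) ≤ 2 * χ * rho H := by
  classical
  rcases Nat.eq_zero_or_pos n with h0 | hnpos
  · simp [h0]
  have hVne : Nonempty V := by
    rw [hn] at hnpos; exact Fintype.card_pos_iff.mp hnpos
  have hcol : H.Colorable χ := SimpleGraph.chromaticNumber_le_iff_colorable.mp (le_of_eq hχ)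
  obtain ⟨CH⟩ := hcol
  have hχpos : 0 < χ := (CH (Classical.arbitrary V)).pos
  have hSne : {m : ℕ | ∃ G : SimpleGraph (Fin m), ArrowsR G H}.Nonempty := by
    obtain ⟨m, G, hG⟩ := exists_arrows H
    exact ⟨m, G, hG⟩
  have hmem : ∃ G : SimpleGraph (Fin (rho H)), ArrowsR G H := Nat.sInf_mem hSne
  obtain ⟨G, hG⟩ := hmem
  obtain ⟨C, h2, h3⟩ := key hn hχpos CH G hG
  have hclass : ∀ j ∈ Finset.range n, (n - 1 - j) / χ + 1 ≤ (C j).card := by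
    intro j hj
    have hj' := Finset.mem_range.mp hj
    have h3j := h3 j hj'
    have hs1 : 1 ≤ (C j).card := by
      rcases Nat.eq_zero_or_pos (C j).card with h | h
      · rw [h, Nat.mul_zero] at h3j; omega
      · exact h
    have hlt : (n - 1 - j) / χ < (C j).card := by
      rw [Nat.div_lt_iff_lt_mul hχpos]
      have hcomm : χ * (C j).card = (C j).card * χ := Nat.mul_comm _ _
      omega
    omega
  have hsum1 : ∑ j ∈ Finset.range n, ((n - 1 - j) / χ + 1)
      ≤ ∑ j ∈ Finset.range n, (C j).card := Finset.sum_le_sum hclass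
  have hreflect : ∑ j ∈ Finset.range n, ((n - 1 - j) / χ + 1)
      = ∑ j ∈ Finset.range n, (j / χ + 1) :=
    Finset.sum_range_reflect (fun j => j / χ + 1) n
  have hsum2 : ∑ j ∈ Finset.range n, (C j).card ≤ rho H := by
    calc ∑ j ∈ Finset.range n, (C j).card
        = ((Finset.range n).biUnion C).card := (Finset.card_biUnion (fun j hj k hk hjk =>
            h2 j (Finset.mem_range.mp hj) k (Finset.mem_range.mp hk) hjk)).symm
      _ ≤ (Finset.univ : Finset (Fin (rho H))).card :=
            Finset.card_le_card (Finset.subset_univ _)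
      _ = rho H := by simp
  have hid := arith_id χ hχpos n
  calc n * (n + χ) ≤ 2 * χ * ∑ j ∈ Finset.range n, (j / χ + 1) := by omega
    _ ≤ 2 * χ * ∑ j ∈ Finset.range n, (C j).card := by
        rw [← hreflect]; exact Nat.mul_le_mul_left _ hsum1
    _ ≤ 2 * χ * rho H := Nat.mul_le_mul_left _ hsum2
end

section
/- Let T(n,r) be the Turán graph, i.e., the complete r-partite graph on n vertices whose r independent classes have sizes as equal as possible, where 1 ≤ r ≤ n. Write n = kr + s with 0 < s ≤ r (so k = ⌈n/r⌉ − 1 when r does not divide n, and s is the number of classes of the larger size ⌈n/r⌉, with s = r when r divides n). Then ρ(T(n,r)) = ⌈n/r⌉ · (n + s)/2. -/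
open Finset

section Peel
variable {m : ℕ} (G : SimpleGraph (Fin m))

/-- independence of a finset -/
def Ind (G : SimpleGraph (Fin m)) (B : Finset (Fin m)) : Prop :=
  ∀ u ∈ B, ∀ v ∈ B, ¬ G.Adj u v

open Classical in
lemma exists_maxInd (A : Finset (Fin m)) :
    ∃ B : Finset (Fin m), B ⊆ A ∧ Ind G B ∧
      ∀ C : Finset (Fin m), C ⊆ A → Ind G C → C.card ≤ B.card := by
  classical
  have hne : (A.powerset.filter (fun B => Ind G B)).Nonempty := by
    refine ⟨∅, ?_⟩
    rw [mem_filter, mem_powerset]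
    simp [Ind]
  obtain ⟨B, hB, hmax⟩ := Finset.exists_max_image _ Finset.card hne
  rw [mem_filter, mem_powerset] at hB
  refine ⟨B, hB.1, hB.2, fun C hC hCI => hmax C ?_⟩
  rw [mem_filter, mem_powerset]
  exact ⟨hC, hCI⟩

noncomputable def maxInd (A : Finset (Fin m)) : Finset (Fin m) :=
  (exists_maxInd G A).choose

lemma maxInd_subset (A : Finset (Fin m)) : maxInd G A ⊆ A :=
  (exists_maxInd G A).choose_spec.1

lemma maxInd_ind (A : Finset (Fin m)) : Ind G (maxInd G A) :=
  (exists_maxInd G A).choose_spec.2.1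

lemma maxInd_max (A : Finset (Fin m)) {C : Finset (Fin m)} (hC : C ⊆ A) (hCI : Ind G C) :
    C.card ≤ (maxInd G A).card :=
  (exists_maxInd G A).choose_spec.2.2 C hC hCI

noncomputable def rem : ℕ → Finset (Fin m)
  | 0 => Finset.univ
  | (l+1) => rem l \ maxInd G (rem l)

noncomputable def Jl (l : ℕ) : Finset (Fin m) := maxInd G (rem G l)

lemma rem_succ (l : ℕ) : rem G (l+1) = rem G l \ Jl G l := rfl

lemma rem_anti : ∀ {l l' : ℕ}, l ≤ l' → rem G l' ⊆ rem G l := by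
  intro l l' h
  induction h with
  | refl => exact Finset.Subset.refl _
  | step h ih => exact fun x hx => ih (by exact (Finset.sdiff_subset) hx)

lemma card_rem_le : ∀ l : ℕ, (rem G l).card ≤ m - l := by
  intro l
  induction l with
  | zero => simp [rem]
  | succ l ih =>
    rcases Finset.eq_empty_or_nonempty (rem G l) with h | h
    · rw [rem_succ, h]
      simp
    · obtain ⟨a, ha⟩ := h
      have h1 : 1 ≤ (Jl G l).card := by
        have := maxInd_max G (rem G l) (C := {a}) (by simpa using ha)
          (by intro u hu v hv; simp at hu hv; subst hu; subst hv; exact G.irrefl)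
        simpa [Jl] using this
      have hsub : Jl G l ⊆ rem G l := maxInd_subset G _
      rw [rem_succ, Finset.card_sdiff_of_subset hsub]
      omega

lemma exists_col (v : Fin m) : ∃ l, v ∉ rem G (l + 1) := by
  refine ⟨m, fun hv => ?_⟩
  have := card_rem_le G (m + 1)
  have h0 : (rem G (m+1)).card = 0 := by omega
  rw [Finset.card_eq_zero] at h0
  rw [h0] at hv
  exact absurd hv (Finset.notMem_empty v)

noncomputable def col (v : Fin m) : ℕ := Nat.find (exists_col G v)

lemma col_notmem (v : Fin m) : v ∉ rem G (col G v + 1) := Nat.find_spec (exists_col G v)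

lemma mem_rem_of_le_col {v : Fin m} {l : ℕ} (h : l ≤ col G v) : v ∈ rem G l := by
  cases l with
  | zero => simp [rem]
  | succ t =>
    have ht : t < col G v := h
    have := Nat.find_min (exists_col G v) ht
    simpa using this

lemma col_memJ (v : Fin m) : v ∈ Jl G (col G v) := by
  have h1 : v ∈ rem G (col G v) := mem_rem_of_le_col G le_rfl
  have h2 := col_notmem G v
  rw [rem_succ, Finset.mem_sdiff] at h2
  push_neg at h2
  exact h2 h1

lemma col_proper {u v : Fin m} (h : G.Adj u v) : col G u ≠ col G v := by
  intro he
  have hu := col_memJ G u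
  have hv := col_memJ G v
  rw [he] at hu
  exact maxInd_ind G (rem G (col G v)) u hu v hv h

lemma Jl_subset (l : ℕ) : Jl G l ⊆ rem G l := maxInd_subset G _

lemma Jl_disj {l l' : ℕ} (h : l < l') : Disjoint (Jl G l) (Jl G l') := by
  have h1 : Jl G l' ⊆ rem G (l + 1) := (Jl_subset G l').trans (rem_anti G h)
  rw [rem_succ] at h1
  exact Finset.disjoint_right.2 fun x hx => (Finset.mem_sdiff.1 (h1 hx)).2

lemma sum_Jl_le (t : ℕ) : ∑ l ∈ range t, (Jl G l).card ≤ m := by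
  classical
  have hd : ∀ x ∈ range t, ∀ y ∈ range t, x ≠ y → Disjoint (Jl G x) (Jl G y) := by
    intro x _ y _ hxy
    rcases lt_or_gt_of_ne hxy with h | h
    · exact Jl_disj G h
    · exact (Jl_disj G h).symm
  rw [← Finset.card_biUnion hd]
  exact (Finset.card_le_card (Finset.subset_univ _)).trans_eq (by simp)

end Peel

/-- Lower bound: any graph arrowing the Turán graph has at least ∑ (j/r+1) vertices. -/
theorem lower_bound {m n r : ℕ} (hr : 1 ≤ r) (hn : 1 ≤ n) (G : SimpleGraph (Fin m))
    (hA : ArrowsR G (SimpleGraph.turanGraph n r)) :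
    ∑ j ∈ range n, (j / r + 1) ≤ m := by
  classical
  obtain ⟨f, hf⟩ := hA (col G) (fun u v ha => col_proper G ha)
  have key : ∀ l ∈ range n, (n - 1 - l) / r + 1 ≤ (Jl G l).card := by
    intro l hl
    rw [mem_range] at hl
    set s : Finset (Fin n) := univ.filter (fun v => l ≤ col G (f v)) with hs
    -- n - l ≤ s.card
    have hcompl : (univ.filter (fun v : Fin n => ¬ (l ≤ col G (f v)))).card ≤ l := by
      have h := Finset.card_le_card_of_injOn (s := univ.filter (fun v : Fin n => ¬ (l ≤ col G (f v))))
        (t := range l) (fun v => col G (f v)) ?_ ?_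
      · simpa using h
      · intro a ha
        have ha' := Finset.mem_coe.1 ha
        rw [Finset.mem_filter, not_le] at ha'
        exact Finset.mem_coe.2 (Finset.mem_range.2 ha'.2)
      · intro a _ b _ hab
        exact hf hab
    have hscard : n - l ≤ s.card := by
      have h := Finset.card_filter_add_card_filter_not
        (s := (univ : Finset (Fin n))) (fun v => l ≤ col G (f v))
      rw [Finset.card_univ, Fintype.card_fin, ← hs] at h
      omega
    -- fibers
    have hfib : s.card = ∑ i ∈ range r, (s.filter (fun v : Fin n => (v : ℕ) % r = i)).card :=
      Finset.card_eq_sum_card_fiberwise (f := fun v : Fin n => (v : ℕ) % r) (t := range r)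
        (fun x _ => Finset.mem_range.2 (Nat.mod_lt _ hr))
    obtain ⟨i, hi, hmax⟩ := Finset.exists_max_image (range r)
      (fun i => (s.filter (fun v : Fin n => (v : ℕ) % r = i)).card) ⟨0, mem_range.2 hr⟩
    have h1 : s.card ≤ r * (s.filter (fun v : Fin n => (v : ℕ) % r = i)).card := by
      calc s.card = ∑ i ∈ range r, (s.filter (fun v : Fin n => (v : ℕ) % r = i)).card := hfib
        _ ≤ (range r).card • (s.filter (fun v : Fin n => (v : ℕ) % r = i)).card :=
            Finset.sum_le_card_nsmul _ _ _ (fun x hx => hmax x hx)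
        _ = r * (s.filter (fun v : Fin n => (v : ℕ) % r = i)).card := by
            rw [Finset.card_range, smul_eq_mul]
    -- fiber indep ⊆ rem l, so card ≤ card Jl
    have h2 : (s.filter (fun v : Fin n => (v : ℕ) % r = i)).card ≤ (Jl G l).card := by
      set B : Finset (Fin m) := (s.filter (fun v : Fin n => (v : ℕ) % r = i)).image f with hB
      have hBsub : B ⊆ rem G l := by
        intro x hx
        rw [hB, Finset.mem_image] at hx
        obtain ⟨v, hv, rfl⟩ := hx
        rw [Finset.mem_filter] at hv
        have hv2 := hv.1
        rw [hs, Finset.mem_filter] at hv2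
        exact mem_rem_of_le_col G hv2.2
      have hBind : Ind G B := by
        intro x hx y hy hadj
        rw [hB, Finset.mem_image] at hx hy
        obtain ⟨a, ha, rfl⟩ := hx
        obtain ⟨b, hb, rfl⟩ := hy
        rw [Finset.mem_filter] at ha hb
        have : (SimpleGraph.turanGraph n r).Adj a b := f.map_rel_iff.1 hadj
        exact this (by rw [ha.2, hb.2] : (a : ℕ) % r = (b : ℕ) % r)
      have := maxInd_max G (rem G l) hBsub hBind
      have hcard : B.card = (s.filter (fun v : Fin n => (v : ℕ) % r = i)).card := by
        rw [hB]
        exact Finset.card_image_of_injective _ f.injective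
      rw [hcard] at this
      exact this
    -- combine
    have h3 : n - l ≤ r * (Jl G l).card := by
      calc n - l ≤ s.card := hscard
        _ ≤ r * (s.filter (fun v : Fin n => (v : ℕ) % r = i)).card := h1
        _ ≤ r * (Jl G l).card := Nat.mul_le_mul_left r h2
    have h4 : (n - 1 - l) / r < (Jl G l).card := by
      rw [Nat.div_lt_iff_lt_mul hr]
      have : n - 1 - l < n - l := by omega
      calc n - 1 - l < n - l := this
        _ ≤ r * (Jl G l).card := h3
        _ = (Jl G l).card * r := Nat.mul_comm _ _
    omega
  calc ∑ j ∈ range n, (j / r + 1)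
      = ∑ l ∈ range n, ((n - 1 - l) / r + 1) := (Finset.sum_range_reflect (fun j => j / r + 1) n).symm
    _ ≤ ∑ l ∈ range n, (Jl G l).card := Finset.sum_le_sum key
    _ ≤ m := sum_Jl_le G n

section Upper

open Finset

variable (n r : ℕ)

/-- Vertex type of the extremal graph: for each Turán vertex `v`, a clique of size `v/r + 1`. -/
def WV (n r : ℕ) : Type := Σ v : Fin n, Fin ((v : ℕ) / r + 1)

instance : Fintype (WV n r) := by unfold WV; infer_instance
instance : DecidableEq (WV n r) := by unfold WV; exact Sigma.instDecidableEqSigma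

/-- The extremal graph: join of unions of cliques. -/
def UG (n r : ℕ) : SimpleGraph (WV n r) where
  Adj p q := p ≠ q ∧ ((p.1 : ℕ) % r ≠ (q.1 : ℕ) % r ∨ p.1 = q.1)
  symm := by
    constructor
    rintro p q ⟨h1, h2⟩
    refine ⟨fun h => h1 h.symm, ?_⟩
    rcases h2 with h | h
    · exact Or.inl h.symm
    · exact Or.inr h.symm
  loopless := ⟨fun p h => h.1 rfl⟩

lemma card_WV : Fintype.card (WV n r) = ∑ j ∈ range n, (j / r + 1) := by
  unfold WV
  rw [Fintype.card_sigma]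
  simp only [Fintype.card_fin]
  exact Fin.sum_univ_eq_sum_range (fun j => j / r + 1) n

/-- count of earlier same-residue numbers -/
lemma count_residues (r : ℕ) (hr : 1 ≤ r) (v : ℕ) :
    ((range v).filter (fun u => u % r = v % r)).card = v / r := by
  classical
  have himg : (range v).filter (fun u => u % r = v % r)
      = (range (v / r)).image (fun j => v % r + j * r) := by
    ext u
    simp only [Finset.mem_filter, Finset.mem_range, Finset.mem_image]
    constructor
    · rintro ⟨hu, hmod⟩
      refine ⟨u / r, ?_, ?_⟩
      · -- u / r < v / r
        rcases Nat.lt_or_ge (u / r) (v / r) with h | h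
        · exact h
        · exfalso
          have h1 : v / r ≤ u / r := h
          have h2 : v = r * (v / r) + v % r := (Nat.div_add_mod v r).symm.trans (by ring)
          have h3 : u = r * (u / r) + u % r := (Nat.div_add_mod u r).symm.trans (by ring)
          have : v ≤ u := by
            calc v = r * (v / r) + v % r := h2
              _ ≤ r * (u / r) + u % r := by
                  rw [hmod]
                  exact Nat.add_le_add_right (Nat.mul_le_mul_left r h1) _
              _ = u := h3.symm
          omega
      · rw [← hmod]
        calc u % r + u / r * r = r * (u / r) + u % r := by ring
          _ = u := Nat.div_add_mod u r
    · rintro ⟨j, hj, rfl⟩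
      have hmodr : v % r < r := Nat.mod_lt _ hr
      constructor
      · have h4 := Nat.div_add_mod v r
        have h5 : j * r + r ≤ (v / r) * r := by
          have h7 : j + 1 ≤ v / r := hj
          calc j * r + r = (j + 1) * r := by ring
            _ ≤ (v / r) * r := Nat.mul_le_mul_right r h7
        have h6 : (v / r) * r = r * (v / r) := Nat.mul_comm _ _
        omega
      · rw [Nat.add_mul_mod_self_right]
        exact Nat.mod_eq_of_lt hmodr
  rw [himg, Finset.card_image_of_injective, Finset.card_range]
  intro a b hab
  simp only at hab
  have : a * r = b * r := by omega
  exact Nat.eq_of_mul_eq_mul_right hr this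

variable {n r}

/-- Greedy choice of one vertex per clique with new colors within each residue class. -/
lemma exists_picks (hr : 1 ≤ r) (c : WV n r → ℕ)
    (hc : ∀ p q : WV n r, (UG n r).Adj p q → c p ≠ c q) :
    ∀ t : ℕ, t ≤ n → ∃ x : (v : Fin n) → Fin ((v : ℕ) / r + 1),
      ∀ u v : Fin n, (u : ℕ) < (v : ℕ) → (v : ℕ) < t → (u : ℕ) % r = (v : ℕ) % r →
        c ⟨u, x u⟩ ≠ c ⟨v, x v⟩ := by
  classical
  intro t
  induction t with
  | zero => exact fun _ => ⟨fun v => ⟨0, Nat.succ_pos _⟩, fun u v _ h2 _ => absurd h2 (Nat.not_lt_zero _)⟩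
  | succ t ih =>
    intro ht
    obtain ⟨x, hx⟩ := ih (Nat.le_of_succ_le ht)
    have htn : t < n := ht
    set v₀ : Fin n := ⟨t, htn⟩ with hv₀
    -- forbidden colors
    set forb : Finset ℕ := (((range t).filter (fun u => u % r = t % r)).attach).image
      (fun u => c ⟨⟨u.1, lt_trans (Finset.mem_range.mp (Finset.mem_filter.mp u.2).1) htn⟩,
        x ⟨u.1, lt_trans (Finset.mem_range.mp (Finset.mem_filter.mp u.2).1) htn⟩⟩) with hforb
    have hforbcard : forb.card ≤ t / r := by
      calc forb.card ≤ (((range t).filter (fun u => u % r = t % r)).attach).card :=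
            Finset.card_image_le
        _ = ((range t).filter (fun u => u % r = t % r)).card := Finset.card_attach
        _ = t / r := count_residues r hr t
    -- the clique at v₀ has t/r + 1 distinct colors
    have hclique : Function.Injective (fun y : Fin ((v₀ : ℕ) / r + 1) => c ⟨v₀, y⟩) := by
      intro a b hab
      by_contra hne
      refine hc ⟨v₀, a⟩ ⟨v₀, b⟩ (show _ ∧ _ from ⟨?_, Or.inr rfl⟩) hab
      intro h
      exact hne (by
        have := (Sigma.mk.inj_iff.mp h).2
        exact eq_of_heq this)
    have hex : ∃ y : Fin ((v₀ : ℕ) / r + 1), c ⟨v₀, y⟩ ∉ forb := by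
      by_contra hno
      push_neg at hno
      have hsub : (univ : Finset (Fin ((v₀ : ℕ) / r + 1))).image (fun y => c ⟨v₀, y⟩) ⊆ forb := by
        intro z hz
        rw [Finset.mem_image] at hz
        obtain ⟨y, _, rfl⟩ := hz
        exact hno y
      have h1 : t / r + 1 ≤ forb.card := by
        calc t / r + 1 = (univ : Finset (Fin ((v₀ : ℕ) / r + 1))).card := by
              rw [Finset.card_univ, Fintype.card_fin]
          _ = ((univ : Finset (Fin ((v₀ : ℕ) / r + 1))).image (fun y => c ⟨v₀, y⟩)).card :=
              (Finset.card_image_of_injective _ hclique).symm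
          _ ≤ forb.card := Finset.card_le_card hsub
      omega
    obtain ⟨y, hy⟩ := hex
    refine ⟨Function.update x v₀ y, ?_⟩
    intro u v huv hvt hmod
    have hvn : (v : ℕ) < n := v.2
    rcases Nat.lt_or_ge (v : ℕ) t with hvt' | hvt'
    · -- both below t : unchanged
      have hu : Function.update x v₀ y u = x u := by
        apply Function.update_of_ne
        intro h
        have : (u : ℕ) = t := by rw [h]
        omega
      have hv : Function.update x v₀ y v = x v := by
        apply Function.update_of_ne
        intro h
        have : (v : ℕ) = t := by rw [h]
        omega
      rw [hu, hv]
      exact hx u v huv hvt' hmod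
    · -- v is the new vertex v₀
      have hvt2 : (v : ℕ) = t := by omega
      have hveq : v = v₀ := Fin.ext hvt2
      rw [hveq] at hmod ⊢
      have hu : Function.update x v₀ y u = x u := by
        apply Function.update_of_ne
        intro h
        have : (u : ℕ) = t := by rw [h]
        omega
      have hv : Function.update x v₀ y v₀ = y := Function.update_self _ _ _
      rw [hu, hv]
      intro hcontra
      apply hy
      rw [hforb, Finset.mem_image]
      have humem : (u : ℕ) ∈ (range t).filter (fun w => w % r = t % r) := by
        rw [Finset.mem_filter, Finset.mem_range]
        exact ⟨by omega, hmod⟩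
      exact ⟨⟨(u : ℕ), humem⟩, Finset.mem_attach _ _, hcontra⟩

end Upper

section Assemble

open Finset

variable {n r : ℕ}

theorem arrows_UG (hr : 1 ≤ r) : ArrowsR (UG n r) (SimpleGraph.turanGraph n r) := by
  intro c hc
  obtain ⟨x, hx⟩ := exists_picks hr c hc n le_rfl
  have hinj : Function.Injective (fun v : Fin n => (⟨v, x v⟩ : WV n r)) := by
    intro a b h
    exact (Sigma.mk.inj_iff.mp h).1
  refine ⟨⟨⟨fun v => ⟨v, x v⟩, hinj⟩, ?_⟩, ?_⟩
  · -- map_rel_iff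
    intro a b
    show (UG n r).Adj ⟨a, x a⟩ ⟨b, x b⟩ ↔ (SimpleGraph.turanGraph n r).Adj a b
    constructor
    · rintro (⟨hne, h | h⟩ : _ ∧ (_ ∨ _))
      · exact h
      · refine absurd ?_ hne
        have hab : a = b := h
        rw [hab]
    · intro h
      exact (show _ ∧ _ from ⟨fun he => h (congrArg (fun p : WV n r => (p.1 : ℕ) % r) he), Or.inl h⟩)
  · -- rainbow
    intro a b h
    simp only at h
    by_contra hne
    have hab : a ≠ b := hne
    rcases eq_or_ne ((a : ℕ) % r) ((b : ℕ) % r) with hmod | hmod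
    · rcases lt_trichotomy (a : ℕ) (b : ℕ) with hlt | heq | hgt
      · exact hx a b hlt b.2 hmod h
      · exact hab (Fin.ext heq)
      · exact hx b a hgt a.2 hmod.symm h.symm
    · refine hc ⟨a, x a⟩ ⟨b, x b⟩ (show _ ∧ _ from ⟨?_, Or.inl hmod⟩) h
      intro he
      exact hab (Fin.ext (congrArg (fun p : WV n r => (p.1 : ℕ)) he))

theorem arrows_fin (n r : ℕ) (hr : 1 ≤ r) :
    ∃ G : SimpleGraph (Fin (∑ j ∈ range n, (j / r + 1))),
      ArrowsR G (SimpleGraph.turanGraph n r) := by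
  classical
  have hcard : Fintype.card (WV n r) = ∑ j ∈ range n, (j / r + 1) := card_WV n r
  let e : WV n r ≃ Fin (∑ j ∈ range n, (j / r + 1)) :=
    (Fintype.equivFin (WV n r)).trans (finCongr hcard)
  refine ⟨(UG n r).comap e.symm, ?_⟩
  intro c hc
  have hc' : ∀ p q : WV n r, (UG n r).Adj p q → c (e p) ≠ c (e q) := by
    intro p q h
    apply hc
    show (UG n r).Adj (e.symm (e p)) (e.symm (e q))
    rwa [Equiv.symm_apply_apply, Equiv.symm_apply_apply]
  obtain ⟨f0, hf0⟩ := arrows_UG hr (fun w => c (e w)) hc'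
  let iso : UG n r ≃g (UG n r).comap e.symm :=
    { toEquiv := e
      map_rel_iff' := by
        intro a b
        show (UG n r).Adj (e.symm (e a)) (e.symm (e b)) ↔ (UG n r).Adj a b
        rw [Equiv.symm_apply_apply, Equiv.symm_apply_apply] }
  refine ⟨iso.toEmbedding.comp f0, ?_⟩
  intro a b h
  exact hf0 h

/-- arithmetic: `2·∑_{j<kr+s} (j/r) + rk = rk² + 2sk`. -/
lemma sum_div_mul (r : ℕ) (hr : 1 ≤ r) :
    ∀ k s : ℕ, s ≤ r →
      2 * (∑ j ∈ range (k * r + s), (j / r)) + r * k = r * k * k + 2 * (s * k) := by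
  intro k
  induction k with
  | zero =>
    intro s hs
    have hz : ∑ j ∈ range (0 * r + s), (j / r) = 0 := by
      apply Finset.sum_eq_zero
      intro j hj
      rw [Finset.mem_range] at hj
      exact Nat.div_eq_of_lt (by omega)
    rw [hz]
    ring
  | succ k ih =>
    have base : 2 * (∑ j ∈ range ((k + 1) * r + 0), (j / r)) + r * (k + 1)
        = r * (k + 1) * (k + 1) + 2 * (0 * (k + 1)) := by
      have h := ih r le_rfl
      have he : (k + 1) * r + 0 = k * r + r := by ring
      rw [he]
      nlinarith [h]
    intro s
    induction s with
    | zero => exact fun _ => base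
    | succ s ihs =>
      intro hs
      have hs' : s ≤ r := by omega
      have hdiv : ((k + 1) * r + s) / r = k + 1 := by
        have h1 : (k + 1) * r + s = r * (k + 1) + s := by ring
        rw [h1, Nat.mul_add_div (by omega : 0 < r), Nat.div_eq_of_lt (by omega : s < r)]
      have hstep : ∑ j ∈ range ((k + 1) * r + (s + 1)), (j / r)
          = (∑ j ∈ range ((k + 1) * r + s), (j / r)) + (k + 1) := by
        have h2 : (k + 1) * r + (s + 1) = ((k + 1) * r + s) + 1 := by ring
        rw [h2, Finset.sum_range_succ, hdiv]
      have h3 := ihs hs'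
      have h4 : (s + 1) * (k + 1) = s * (k + 1) + (k + 1) := by ring
      rw [hstep]
      omega

end Assemble


/-- For the Turán graph `T(n,r)` with `1 ≤ r ≤ n`, `n = k·r + s`, `0 < s ≤ r`
(so `⌈n/r⌉ = k + 1` and `s` is the number of larger classes):
`ρ(T(n,r)) = ⌈n/r⌉·(n+s)/2`, stated as `2·ρ(T(n,r)) = (k+1)·(n+s)`. -/
theorem stmt6 (n r k s : ℕ) (hr : 1 ≤ r) (hrn : r ≤ n)
    (hn : n = k * r + s) (hs : 0 < s) (hsr : s ≤ r) :
    2 * rho (SimpleGraph.turanGraph n r) = (k + 1) * (n + s) := by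

  have hn1 : 1 ≤ n := le_trans hr hrn
  have hrho : rho (SimpleGraph.turanGraph n r) = ∑ j ∈ Finset.range n, (j / r + 1) := by
    have hmem : (∑ j ∈ Finset.range n, (j / r + 1)) ∈
        {m : ℕ | ∃ G : SimpleGraph (Fin m), ArrowsR G (SimpleGraph.turanGraph n r)} :=
      arrows_fin n r hr
    have hne : {m : ℕ | ∃ G : SimpleGraph (Fin m), ArrowsR G (SimpleGraph.turanGraph n r)}.Nonempty :=
      ⟨_, hmem⟩
    refine le_antisymm (Nat.sInf_le hmem) ?_
    obtain ⟨G, hG⟩ := Nat.sInf_mem hne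
    exact lower_bound hr hn1 G hG
  rw [hrho]
  have hsplit : ∑ j ∈ Finset.range n, (j / r + 1) = (∑ j ∈ Finset.range n, (j / r)) + n := by
    rw [Finset.sum_add_distrib]
    simp
  have harith : 2 * (∑ j ∈ Finset.range n, (j / r)) + r * k = r * k * k + 2 * (s * k) := by
    rw [hn]
    exact sum_div_mul r hr k s hsr
  rw [hsplit]
  subst hn
  nlinarith [harith]
end
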